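/- Let n ≥ 1 and let f : ℝ → (complex n×n matrices) be differentiable at λ with derivative f'(λ). Then the map t ↦ exp(−f(t)) is differentiable at λ, and its derivative equals −(∫₀¹ exp(−s·f(λ))·f'(λ)·exp(s·f(λ)) ds)·exp(−f(λ)). -/

import Mathlib

open Matrix MeasureTheory NormedSpace

attribute [local instance] Matrix.linftyOpNormedRing Matrix.linftyOpNormedAlgebra

section aux
variable {𝔸 : Type*} [NormedRing 𝔸] [NormedAlgebra ℝ 𝔸] [CompleteSpace 𝔸]

lemma aux_exp_continuous : Continuous (exp : 𝔸 → 𝔸) :=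
  continuous_iff_continuousAt.2 fun x => (exp_analytic (𝕂 := ℝ) x).continuousAt

lemma aux_hasDerivAt (X Y : 𝔸) (s : ℝ) :
    HasDerivAt (fun u : ℝ => exp (u • X) * exp ((1 - u) • Y))
      (exp (s • X) * (X - Y) * exp ((1 - s) • Y)) s := by
  have h1 : HasDerivAt (fun u : ℝ => exp (u • X)) (exp (s • X) * X) s :=
    hasDerivAt_exp_smul_const X s
  have h2 : HasDerivAt (fun u : ℝ => exp ((1 - u) • Y))
      ((-1 : ℝ) • (Y * exp ((1 - s) • Y))) s := by
    have hin : HasDerivAt (fun u : ℝ => 1 - u) (-1) s := by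
      simpa using (hasDerivAt_id s).const_sub 1
    exact (hasDerivAt_exp_smul_const' Y (1 - s)).scomp s hin
  have := h1.mul h2
  convert this using 1
  · rfl
  simp [mul_sub, sub_mul, mul_assoc]
  noncomm_ring

lemma aux_cont (X Y : 𝔸) : Continuous fun s : ℝ =>
    exp (s • X) * (X - Y) * exp ((1 - s) • Y) := by
  have h1 : Continuous fun s : ℝ => exp (s • X) :=
    aux_exp_continuous.comp (continuous_id.smul continuous_const)
  have h2 : Continuous fun s : ℝ => exp ((1 - s) • Y) :=
    aux_exp_continuous.comp ((continuous_const.sub continuous_id).smul continuous_const)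
  exact (h1.mul continuous_const).mul h2

/-- Duhamel's formula. -/
lemma duhamel (X Y : 𝔸) :
    exp X - exp Y = ∫ s in (0:ℝ)..1, exp (s • X) * (X - Y) * exp ((1 - s) • Y) := by
  have := intervalIntegral.integral_eq_sub_of_hasDerivAt
    (f := fun u : ℝ => exp (u • X) * exp ((1 - u) • Y))
    (f' := fun s => exp (s • X) * (X - Y) * exp ((1 - s) • Y))
    (fun s _ => aux_hasDerivAt X Y s) ((aux_cont X Y).intervalIntegrable 0 1)
  rw [this]
  simp [NormedSpace.exp_zero]

lemma contG (C : 𝔸) : Continuous fun p : 𝔸 × 𝔸 =>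
    ∫ s in (0:ℝ)..1, exp (s • p.1) * p.2 * exp ((1 - s) • C) := by
  apply intervalIntegral.continuous_parametric_intervalIntegral_of_continuous'
  apply Continuous.mul
  · apply Continuous.mul
    · exact aux_exp_continuous.comp ((continuous_snd.smul (continuous_fst.fst)))
    · exact continuous_fst.snd
  · exact aux_exp_continuous.comp ((continuous_const.sub continuous_snd).smul continuous_const)

end aux

theorem quantum_chain_rule_exp_neg
    {n : ℕ} (hn : 1 ≤ n)
    (f : ℝ → Matrix (Fin n) (Fin n) ℂ)
    (f' : Matrix (Fin n) (Fin n) ℂ) (l : ℝ)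
    (hf : HasDerivAt f f' l) :
    HasDerivAt (fun t => NormedSpace.exp (-f t))
      (-((∫ s in (0:ℝ)..1,
            NormedSpace.exp ((-s) • f l) * f' * NormedSpace.exp (s • f l))
          * NormedSpace.exp (-f l))) l := by
  set G : Matrix (Fin n) (Fin n) ℂ × Matrix (Fin n) (Fin n) ℂ → Matrix (Fin n) (Fin n) ℂ :=
    fun p => ∫ s in (0:ℝ)..1, exp (s • p.1) * p.2 * exp ((1 - s) • (-f l)) with hG
  have hint : @IntervalIntegrable _ PseudoMetricSpace.toUniformSpace.toTopologicalSpace _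
      (fun s : ℝ => exp ((-s) • f l) * f' * exp (s • f l)) volume 0 1 := by
    apply Continuous.intervalIntegrable
    exact ((aux_exp_continuous.comp (continuous_id.neg.smul continuous_const)).mul
      continuous_const).mul (aux_exp_continuous.comp (continuous_id.smul continuous_const))
  have hval : G (-f l, -f') =
      -((∫ s in (0:ℝ)..1, exp ((-s) • f l) * f' * exp (s • f l)) * exp (-f l)) := by
    rw [hG]
    have hpull := ((ContinuousLinearMap.mul ℝ
      (Matrix (Fin n) (Fin n) ℂ)).flip (exp (-f l))).intervalIntegral_comp_comm hint
    simp only [ContinuousLinearMap.flip_apply, ContinuousLinearMap.mul_apply'] at hpull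
    rw [← hpull, ← intervalIntegral.integral_neg]
    refine intervalIntegral.integral_congr fun s _ => ?_
    have hcomm : Commute (s • f l) (-f l) := ((Commute.refl (f l)).neg_right).smul_left s
    have h1 : (1 - s) • (-f l) = s • f l + (-f l) := by
      rw [sub_smul, one_smul, smul_neg]; abel
    erw [h1, exp_add_of_commute hcomm]
    have h2 : (s : ℝ) • (-f l) = (-s) • f l := by rw [smul_neg, neg_smul]
    rw [h2]
    noncomm_ring
  rw [← hval]
  refine hasDerivAt_iff_tendsto_slope.mpr ?_
  have hkey : ∀ t, slope (fun t => exp (-f t)) l t = G (-f t, -(slope f l t)) := by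
    intro t
    rw [hG]
    simp only [slope_def_module]
    erw [duhamel (-f t) (-f l), ← intervalIntegral.integral_smul]
    refine intervalIntegral.integral_congr fun s _ => ?_
    have h3 : -f t - -f l = -(f t - f l) := by abel
    rw [h3]
    simp only [mul_neg, neg_mul, mul_smul_comm, smul_mul_assoc, smul_neg]
    rfl
  have htends : Filter.Tendsto (fun t => (-f t, -(slope f l t)))
      (nhdsWithin l {l}ᶜ) (nhds (-f l, -f')) := by
    refine Filter.Tendsto.prodMk_nhds ?_ ?_
    · exact ((hf.continuousAt.tendsto.mono_left nhdsWithin_le_nhds).neg)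
    · exact (hasDerivAt_iff_tendsto_slope.mp hf).neg
  have hcomp := ((contG (𝔸 := Matrix (Fin n) (Fin n) ℂ) (-f l)).tendsto (-f l, -f')).comp htends
  exact Filter.Tendsto.congr (fun t => (hkey t).symm) hcomp
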